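/- Let (Γ_i)_{i∈ℕ} be a sequence of convex functions ℝ → ℝ, each differentiable, such that for every λ ∈ ℝ the series Σ_{i=1}^∞ Γ_i(λ) converges (the partial sums converge to a finite limit). Then for every λ ∈ ℝ the series Σ_{i=1}^∞ Γ_i'(λ) also converges to a finite limit. (The key bound: convexity gives Γ_i(λ) − Γ_i(λ−1) ≤ Γ_i'(λ) ≤ Γ_i(λ+1) − Γ_i(λ), so the partial sums of Γ_i'(λ) are Cauchy.) -/

import Mathlib

open Filter

/-- If `(Γ_i)` are differentiable convex functions `ℝ → ℝ` such that
`Σ_i Γ_i(λ)` converges (partial sums converge) for every `λ`, then `Σ_i Γ_i'(λ)` also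
converges for every `λ`. -/
theorem stmt_9 (Γ : ℕ → ℝ → ℝ)
    (hconv : ∀ i, ConvexOn ℝ Set.univ (Γ i))
    (hdiff : ∀ i, Differentiable ℝ (Γ i))
    (hsum : ∀ l : ℝ, ∃ L : ℝ,
      Tendsto (fun N => ∑ i ∈ Finset.range N, Γ i l) atTop (nhds L)) :
    ∀ l : ℝ, ∃ L : ℝ,
      Tendsto (fun N => ∑ i ∈ Finset.range N, deriv (Γ i) l) atTop (nhds L) := by
  intro l
  -- lower and upper slope bounds
  have hlow : ∀ i, Γ i l - Γ i (l - 1) ≤ deriv (Γ i) l := by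
    intro i
    have := (hconv i).slope_le_deriv (Set.mem_univ (l - 1)) (Set.mem_univ l)
      (by linarith) ((hdiff i) l)
    rw [slope_def_field] at this
    have h1 : l - (l - 1) = 1 := by ring
    rw [div_le_iff₀ (by rw [h1]; norm_num)] at this
    linarith [this]
  have hup : ∀ i, deriv (Γ i) l ≤ Γ i (l + 1) - Γ i l := by
    intro i
    have := (hconv i).deriv_le_slope (Set.mem_univ l) (Set.mem_univ (l + 1))
      (by linarith) ((hdiff i) l)
    rw [slope_def_field] at this
    have h1 : l + 1 - l = 1 := by ring
    rw [le_div_iff₀ (by rw [h1]; norm_num)] at this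
    linarith [this]
  set a : ℕ → ℝ := fun i => deriv (Γ i) l - (Γ i l - Γ i (l - 1)) with ha
  set b : ℕ → ℝ := fun i => (Γ i (l + 1) - Γ i l) - (Γ i l - Γ i (l - 1)) with hb
  have ha0 : ∀ i, 0 ≤ a i := fun i => by have := hlow i; simp [ha]; linarith
  have hab : ∀ i, a i ≤ b i := fun i => by have := hup i; simp [ha, hb]; linarith
  obtain ⟨L1, hL1⟩ := hsum (l + 1)
  obtain ⟨L0, hL0⟩ := hsum l
  obtain ⟨Lm, hLm⟩ := hsum (l - 1)
  -- partial sums of b converge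
  have hBsum : Tendsto (fun N => ∑ i ∈ Finset.range N, b i) atTop
      (nhds (L1 - L0 - (L0 - Lm))) := by
    have : (fun N => ∑ i ∈ Finset.range N, b i)
        = fun N => (∑ i ∈ Finset.range N, Γ i (l + 1)) - (∑ i ∈ Finset.range N, Γ i l)
          - ((∑ i ∈ Finset.range N, Γ i l) - (∑ i ∈ Finset.range N, Γ i (l - 1))) := by
      funext N; simp [hb, Finset.sum_sub_distrib]
    rw [this]
    exact ((hL1.sub hL0).sub (hL0.sub hLm))
  set B := L1 - L0 - (L0 - Lm)
  -- partial sums of b are monotone, so each ≤ B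
  have hbmono : Monotone (fun N => ∑ i ∈ Finset.range N, b i) := by
    intro m n hmn
    exact Finset.sum_le_sum_of_subset_of_nonneg (Finset.range_subset_range.2 hmn)
      (fun i _ _ => le_trans (ha0 i) (hab i))
  have hble : ∀ N, (∑ i ∈ Finset.range N, b i) ≤ B :=
    fun N => hbmono.ge_of_tendsto hBsum N
  -- partial sums of a are monotone and bounded by B
  have hamono : Monotone (fun N => ∑ i ∈ Finset.range N, a i) := by
    intro m n hmn
    exact Finset.sum_le_sum_of_subset_of_nonneg (Finset.range_subset_range.2 hmn)
      (fun i _ _ => ha0 i)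
  have hbdd : BddAbove (Set.range fun N => ∑ i ∈ Finset.range N, a i) := by
    refine ⟨B, ?_⟩
    rintro x ⟨N, rfl⟩
    exact le_trans (Finset.sum_le_sum fun i _ => hab i) (hble N)
  have hAsum := tendsto_atTop_ciSup hamono hbdd
  -- partial sums of Γ i l - Γ i (l-1) converge
  have hCsum : Tendsto (fun N => ∑ i ∈ Finset.range N, (Γ i l - Γ i (l - 1))) atTop
      (nhds (L0 - Lm)) := by
    have : (fun N => ∑ i ∈ Finset.range N, (Γ i l - Γ i (l - 1)))
        = fun N => (∑ i ∈ Finset.range N, Γ i l) - (∑ i ∈ Finset.range N, Γ i (l - 1)) := by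
      funext N; simp [Finset.sum_sub_distrib]
    rw [this]; exact hL0.sub hLm
  refine ⟨(⨆ N, ∑ i ∈ Finset.range N, a i) + (L0 - Lm), ?_⟩
  have : (fun N => ∑ i ∈ Finset.range N, deriv (Γ i) l)
      = fun N => (∑ i ∈ Finset.range N, a i)
        + (∑ i ∈ Finset.range N, (Γ i l - Γ i (l - 1))) := by
    funext N
    rw [← Finset.sum_add_distrib]
    congr 1; funext i; simp [ha]
  rw [this]
  exact hAsum.add hCsum
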